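/- For every integer s ≥ 2, every finite 1-locally s-colourable simple graph G on n vertices satisfies χ(G) ≤ √(2sn) (as an inequality of real numbers). -/

import Mathlib

open SimpleGraph

/-- `σ` is a proper colouring of `G` with colours in `ℕ`. -/
def IsProperColoring {V : Type*} (G : SimpleGraph V) (σ : V → ℕ) : Prop :=
  ∀ ⦃u v : V⦄, G.Adj u v → σ u ≠ σ v

/-- The chromatic number of `G`, as a natural number. -/
noncomputable def chromNum {V : Type*} (G : SimpleGraph V) : ℕ :=
  sInf {n : ℕ | G.Colorable n}

/-- The discrepancy `φ_σ(G)` of a proper colouring `σ` of `G`: the maximum, over all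
induced subgraphs `G[S]` of `G`, of `|σ(S)| - χ(G[S])`. -/
noncomputable def colDisc {V : Type*} (G : SimpleGraph V) (σ : V → ℕ) : ℤ :=
  sSup {z : ℤ | ∃ S : Set V, z = ((σ '' S).ncard : ℤ) - (chromNum (G.induce S) : ℤ)}

/-- The chromatic discrepancy `φ(G)`: the minimum of `φ_σ(G)` over all proper
colourings `σ` of `G`. -/
noncomputable def chromDisc {V : Type*} (G : SimpleGraph V) : ℤ :=
  sInf {z : ℤ | ∃ σ : V → ℕ, IsProperColoring G σ ∧ z = colDisc G σ}

/-- `G` is locally `s`-colourable: the closed neighbourhood of every vertex induces an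
`s`-colourable subgraph. -/
def LocallyColorable {V : Type*} (G : SimpleGraph V) (s : ℕ) : Prop :=
  ∀ v : V, chromNum (G.induce (insert v (G.neighborSet v))) ≤ s

/-- The set of vertices at distance at most `r` from `v` in `G`. -/
def ballSet {V : Type*} (G : SimpleGraph V) (v : V) (r : ℕ) : Set V :=
  {u : V | ∃ w : G.Walk v u, w.length ≤ r}

/-- `G` is `r`-locally `s`-colourable: every ball of radius `r` induces an
`s`-colourable subgraph. -/
def RLocallyColorable {V : Type*} (G : SimpleGraph V) (r s : ℕ) : Prop :=
  ∀ v : V, chromNum (G.induce (ballSet G v r)) ≤ s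

/-- `G` contains no cycle of length exactly `n` as a (not necessarily induced) subgraph. -/
def CycleLenFree {V : Type*} (G : SimpleGraph V) (n : ℕ) : Prop :=
  ∀ (v : V) (w : G.Walk v v), w.IsCycle → w.length ≠ n

/-- `H` is `k`-degenerate: every non-empty (induced) subgraph contains a vertex of
degree at most `k` in it. -/
def Degenerate {α : Type*} (H : SimpleGraph α) (k : ℕ) : Prop :=
  ∀ S : Set α, S.Nonempty → ∃ a ∈ S, {b | b ∈ S ∧ H.Adj a b}.ncard ≤ k

/-- `G` is co-locally `s`-colourable: for all vertices `u ≠ v`,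
`χ(G[{u} ∪ N(v)]) ≤ s`. -/
def CoLocallyColorable {V : Type*} (G : SimpleGraph V) (s : ℕ) : Prop :=
  ∀ v u : V, u ≠ v → chromNum (G.induce (insert u (G.neighborSet v))) ≤ s

/-- The minimum of `χ(G[X])` over all subsets `X ⊆ V(G)` spanning exactly `p` colours
of `σ` (a rainbow cover of `σ` when `σ` uses exactly `p` colours). -/
noncomputable def minRainbowChrom {V : Type*} (G : SimpleGraph V) (σ : V → ℕ) (p : ℕ) : ℕ :=
  sInf {c : ℕ | ∃ X : Set V, (σ '' X).ncard = p ∧ c = chromNum (G.induce X)}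

/-- `f_G(p)`: the maximum, over all proper colourings `σ` of `G` using exactly `p`
colours, of the minimum chromatic number of a rainbow cover of `σ`. -/
noncomputable def fG {V : Type*} (G : SimpleGraph V) (p : ℕ) : ℕ :=
  sSup {m : ℕ | ∃ σ : V → ℕ, IsProperColoring G σ ∧ (σ '' Set.univ).ncard = p ∧
    m = minRainbowChrom G σ p}

/-- The closed neighbourhood `N[X]` of a set `X` of vertices. -/
def closedNbhd {V : Type*} (G : SimpleGraph V) (X : Set V) : Set V :=
  X ∪ {u : V | ∃ x ∈ X, G.Adj x u}

universe u

lemma chromNum_le {V : Type*} {G : SimpleGraph V} {m : ℕ} (h : G.Colorable m) :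
    chromNum G ≤ m := Nat.sInf_le h

lemma colorable_chromNum {V : Type*} [Finite V] (G : SimpleGraph V) :
    G.Colorable (chromNum G) := by
  haveI := Fintype.ofFinite V
  exact Nat.sInf_mem (⟨Fintype.card V, G.colorable_of_fintype⟩ : {n : ℕ | G.Colorable n}.Nonempty)

lemma colorable_of_hom {V W : Type*} {G : SimpleGraph V} {H : SimpleGraph W}
    (f : G →g H) {m : ℕ} (h : H.Colorable m) : G.Colorable m := by
  obtain ⟨C⟩ := h
  exact ⟨C.comp f⟩

lemma chromNum_induce_mono {V : Type*} [Finite V] (G : SimpleGraph V) {A B : Set V}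
    (hAB : A ⊆ B) : chromNum (G.induce A) ≤ chromNum (G.induce B) := by
  refine chromNum_le (colorable_of_hom ⟨Set.inclusion hAB, ?_⟩ (colorable_chromNum _))
  intro a b hab
  exact hab

lemma chromNum_induce_union {V : Type*} [Finite V] (G : SimpleGraph V) {S A B : Set V}
    (h : S ⊆ A ∪ B) :
    chromNum (G.induce S) ≤ chromNum (G.induce A) + chromNum (G.induce B) := by
  classical
  obtain ⟨CA⟩ := colorable_chromNum (G.induce A)
  obtain ⟨CB⟩ := colorable_chromNum (G.induce B)
  set a := chromNum (G.induce A)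
  set b := chromNum (G.induce B)
  refine chromNum_le ⟨Coloring.mk
    (fun x => if hx : (x : V) ∈ A then Fin.castAdd b (CA ⟨x, hx⟩)
      else Fin.natAdd a (CB ⟨x, (h x.2).resolve_left hx⟩)) ?_⟩
  rintro ⟨u, hu⟩ ⟨v, hv⟩ huv heq
  have hadj : G.Adj u v := huv
  by_cases h1 : u ∈ A <;> by_cases h2 : v ∈ A <;> simp only [h1, h2, dif_pos, dif_neg,
    not_false_iff] at heq
  · exact CA.valid (by exact hadj : (G.induce A).Adj ⟨u, h1⟩ ⟨v, h2⟩)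
      (Fin.castAdd_injective a b heq)
  · have hv' := congrArg Fin.val heq
    have := (CA ⟨u, h1⟩).is_lt
    simp [Fin.coe_castAdd, Fin.coe_natAdd] at hv'
    omega
  · have hv' := congrArg Fin.val heq
    have := (CA ⟨v, h2⟩).is_lt
    simp [Fin.coe_castAdd, Fin.coe_natAdd] at hv'
    omega
  · refine CB.valid (by exact hadj : (G.induce B).Adj ⟨u, (h hu).resolve_left h1⟩ ⟨v, (h hv).resolve_left h2⟩) ?_
    have hv' := congrArg Fin.val heq
    simp [Fin.coe_natAdd] at hv'
    exact Fin.ext hv'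

lemma greedy_aux : ∀ (k : ℕ) {W : Type u} [Fintype W] (H : SimpleGraph W) (n : ℕ),
    Fintype.card W ≤ k → (∀ w : W, {u | H.Adj w u}.ncard < n) → H.Colorable n := by
  intro k
  induction k with
  | zero =>
    intro W _ H n hc _
    haveI : IsEmpty W := Fintype.card_eq_zero_iff.mp (Nat.le_zero.mp hc)
    exact Colorable.of_isEmpty (G := H) n
  | succ k ih =>
    intro W _ H n hc hdeg
    classical
    rcases isEmpty_or_nonempty W with hE | hNE
    · exact Colorable.of_isEmpty (G := H) n
    obtain ⟨w₀⟩ := hNE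
    set W' := {w : W // w ≠ w₀} with hW'
    have hcard : Fintype.card W' ≤ k := by
      have h2 := Fintype.card_subtype_lt (p := fun w => w ≠ w₀) (x := w₀) (by simp)
      exact Nat.lt_succ_iff.mp (lt_of_lt_of_le h2 hc)
    set H' : SimpleGraph W' := H.comap Subtype.val with hH'
    have hdeg' : ∀ w : W', {u | H'.Adj w u}.ncard < n := by
      intro w
      have hsub : Subtype.val '' {u | H'.Adj w u} ⊆ {u | H.Adj ↑w u} := by
        rintro _ ⟨u, hu, rfl⟩; exact hu
      calc {u | H'.Adj w u}.ncard = (Subtype.val '' {u | H'.Adj w u}).ncard :=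
            (Set.ncard_image_of_injective _ Subtype.val_injective).symm
        _ ≤ {u | H.Adj ↑w u}.ncard := Set.ncard_le_ncard hsub (Set.toFinite _)
        _ < n := hdeg _
    obtain ⟨C⟩ := ih H' n hcard hdeg'
    have himg : (C '' {u : W' | H.Adj w₀ ↑u}).ncard < n := by
      calc (C '' {u : W' | H.Adj w₀ ↑u}).ncard ≤ {u : W' | H.Adj w₀ ↑u}.ncard :=
            Set.ncard_image_le (Set.toFinite _)
        _ = (Subtype.val '' {u : W' | H.Adj w₀ ↑u}).ncard :=
            (Set.ncard_image_of_injective _ Subtype.val_injective).symm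
        _ ≤ {u | H.Adj w₀ u}.ncard := Set.ncard_le_ncard (by rintro _ ⟨u, hu, rfl⟩; exact hu)
            (Set.toFinite _)
        _ < n := hdeg _
    have hex : ∃ c : Fin n, c ∉ C '' {u : W' | H.Adj w₀ ↑u} := by
      by_contra hall
      push_neg at hall
      have : C '' {u : W' | H.Adj w₀ ↑u} = Set.univ := Set.eq_univ_of_forall hall
      rw [this, Set.ncard_univ, Nat.card_eq_fintype_card, Fintype.card_fin] at himg
      omega
    obtain ⟨c, hc0⟩ := hex
    refine ⟨Coloring.mk (fun w => if h : w = w₀ then c else C ⟨w, h⟩) ?_⟩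
    intro u v huv heq
    by_cases h1 : u = w₀ <;> by_cases h2 : v = w₀ <;>
      simp only [h1, h2, dif_pos, dif_neg, not_false_iff] at heq
    · exact H.irrefl (h1 ▸ h2 ▸ huv)
    · exact hc0 ⟨⟨v, h2⟩, by simpa [h1] using huv, heq.symm⟩
    · exact hc0 ⟨⟨u, h1⟩, by simpa [h2] using (H.adj_symm huv), heq⟩
    · exact C.valid (by exact huv : H'.Adj ⟨u, h1⟩ ⟨v, h2⟩) heq

lemma induce_colorable_of_deg {V : Type u} [Fintype V] (G : SimpleGraph V) (S : Set V) (n : ℕ)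
    (h : ∀ v ∈ S, {u | u ∈ S ∧ G.Adj v u}.ncard < n) : (G.induce S).Colorable n := by
  classical
  haveI : Fintype ↥S := Fintype.ofFinite _
  refine greedy_aux (Fintype.card ↥S) (G.induce S) n le_rfl ?_
  intro w
  have hsub : Subtype.val '' {u : ↥S | (G.induce S).Adj w u} ⊆ {u | u ∈ S ∧ G.Adj ↑w u} := by
    rintro _ ⟨u, hu, rfl⟩; exact ⟨u.2, hu⟩
  calc {u : ↥S | (G.induce S).Adj w u}.ncard
      = (Subtype.val '' {u : ↥S | (G.induce S).Adj w u}).ncard :=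
        (Set.ncard_image_of_injective _ Subtype.val_injective).symm
    _ ≤ {u | u ∈ S ∧ G.Adj ↑w u}.ncard := Set.ncard_le_ncard hsub (Set.toFinite _)
    _ < n := h _ w.2

/-- For every integer `s ≥ 2`, every finite `1`-locally `s`-colourable
graph `G` on `n` vertices satisfies `χ(G) ≤ √(2sn)`. -/
theorem chromNum_le_sqrt {V : Type*} [Fintype V]
    (s : ℕ) (hs : 2 ≤ s) (G : SimpleGraph V) (hloc : LocallyColorable G s) :
    (chromNum G : ℝ) ≤ Real.sqrt (2 * s * Fintype.card V) := by
  classical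
  have hs0 : (2 : ℝ) ≤ (s : ℝ) := by exact_mod_cast hs
  have key : ∀ (n : ℕ) (S : Set V), S.ncard ≤ n →
      (chromNum (G.induce S) : ℝ) ≤ Real.sqrt (2 * s * S.ncard) := by
    intro n
    induction n with
    | zero =>
      intro S hS
      have hSe : S = ∅ := (Set.ncard_eq_zero (Set.toFinite S)).mp (Nat.le_zero.mp hS)
      subst hSe
      have h0 : chromNum (G.induce (∅ : Set V)) = 0 :=
        Nat.le_zero.mp (chromNum_le (Colorable.of_isEmpty (G := G.induce (∅ : Set V)) 0))
      rw [h0]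
      simpa using Real.sqrt_nonneg _
    | succ n ih =>
      intro S hS
      rcases Nat.lt_succ_iff_lt_or_eq.mp (Nat.lt_succ_of_le hS) with hlt | hn
      · exact ih S (Nat.lt_succ_iff.mp hlt)
      by_cases hbig : ∃ v ∈ S,
          (({u | u ∈ S ∧ G.Adj v u}).ncard + 1 : ℝ) > Real.sqrt (2 * s * (n + 1))
      · obtain ⟨v, hvS, hv⟩ := hbig
        set A := insert v (G.neighborSet v) with hA
        have hchA : chromNum (G.induce (S ∩ A)) ≤ s :=
          le_trans (chromNum_induce_mono G Set.inter_subset_right) (hloc v)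
        set T := S \ A with hT
        have hcover : S ⊆ (S ∩ A) ∪ T := by
          intro x hx
          by_cases hxA : x ∈ A
          · exact Or.inl ⟨hx, hxA⟩
          · exact Or.inr ⟨hx, hxA⟩
        have h1 := chromNum_induce_union G (S := S) hcover
        -- cardinality facts
        have hDsub : insert v {u | u ∈ S ∧ G.Adj v u} ⊆ S ∩ A := by
          rintro x (rfl | ⟨hxS, hxadj⟩)
          · exact ⟨hvS, Set.mem_insert _ _⟩
          · exact ⟨hxS, Set.mem_insert_of_mem _ hxadj⟩
        have hDcard : {u | u ∈ S ∧ G.Adj v u}.ncard + 1 ≤ (S ∩ A).ncard := by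
          rw [← Set.ncard_insert_of_notMem (fun h => G.irrefl h.2) (Set.toFinite _)]
          exact Set.ncard_le_ncard hDsub (Set.toFinite _)
        have hcS : (S ∩ A).ncard ≤ n + 1 := hn ▸ Set.ncard_le_ncard Set.inter_subset_left
          (Set.toFinite _)
        have hTcard : T.ncard = (n + 1) - (S ∩ A).ncard := by
          rw [hT, ← Set.diff_self_inter, Set.ncard_diff Set.inter_subset_left
            (Set.toFinite _), hn]
        have hTn : T.ncard ≤ n := by omega
        have h2 := ih T hTn
        -- real arithmetic
        set a := Real.sqrt (2 * s * (n + 1)) with ha_def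
        set c := ((S ∩ A).ncard : ℝ) with hc_def
        have hDc : (({u | u ∈ S ∧ G.Adj v u}).ncard + 1 : ℝ) ≤ c := by
          rw [hc_def]; exact_mod_cast hDcard
        have hca : a ≤ c := le_trans (le_of_lt hv) hDc
        have hcN : c ≤ (n : ℝ) + 1 := by rw [hc_def]; exact_mod_cast hcS
        have hc0 : (0 : ℝ) ≤ c := by rw [hc_def]; positivity
        have hTreal : (T.ncard : ℝ) = ((n : ℝ) + 1) - c := by
          rw [hTcard]
          push_cast [Nat.cast_sub hcS]
          ring
        set b := Real.sqrt (2 * s * T.ncard) with hb_def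
        have hargb : (0 : ℝ) ≤ 2 * s * T.ncard := by positivity
        have harga : (0 : ℝ) ≤ 2 * s * (n + 1) := by positivity
        have hb2 : b ^ 2 = 2 * s * (((n : ℝ) + 1) - c) := by
          rw [hb_def, Real.sq_sqrt hargb, hTreal]
        have ha2 : a ^ 2 = 2 * s * ((n : ℝ) + 1) := by
          rw [ha_def, Real.sq_sqrt harga]
        have hba : b ≤ a := by
          rw [hb_def, ha_def]
          apply Real.sqrt_le_sqrt
          rw [hTreal]
          nlinarith [mul_nonneg (show (0:ℝ) ≤ 2 * s by linarith) hc0]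
        have ha0 : 0 < a := by
          rw [ha_def]
          apply Real.sqrt_pos.mpr
          have hsp : (0:ℝ) < s := by linarith
          have hnp : (0:ℝ) < (n : ℝ) + 1 := by positivity
          nlinarith [mul_pos hsp hnp]
        have hb0 : 0 ≤ b := Real.sqrt_nonneg _
        have e1 : (a - b - s) * (a + b) = (s:ℝ) * (c - a) + (s:ℝ) * (c - b) := by
          linear_combination ha2 - hb2
        have hkey : (0:ℝ) ≤ (a - b - s) * (a + b) := by
          rw [e1]
          have hcb : b ≤ c := le_trans hba hca
          have := mul_nonneg (show (0:ℝ) ≤ (s:ℝ) by linarith) (sub_nonneg.mpr hca)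
          have := mul_nonneg (show (0:ℝ) ≤ (s:ℝ) by linarith) (sub_nonneg.mpr hcb)
          linarith
        have hab : (0:ℝ) < a + b := by linarith
        have h4 : (0:ℝ) ≤ a - b - s :=
          le_of_mul_le_mul_right (by rw [zero_mul]; exact hkey) hab
        have h3 : (s : ℝ) + b ≤ a := by linarith
        -- combine
        have hfin : (chromNum (G.induce S) : ℝ) ≤ (s : ℝ) + b := by
          calc (chromNum (G.induce S) : ℝ)
              ≤ (chromNum (G.induce (S ∩ A)) : ℝ) + (chromNum (G.induce T) : ℝ) := by
                exact_mod_cast h1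
            _ ≤ (s : ℝ) + b := add_le_add (by exact_mod_cast hchA) h2
        rw [hn]
        push_cast
        linarith
      · push_neg at hbig
        set m := ⌊Real.sqrt (2 * s * (n + 1))⌋₊ with hm
        have hdeg : ∀ v ∈ S, {u | u ∈ S ∧ G.Adj v u}.ncard < m := by
          intro v hvS
          have := hbig v hvS
          have hle : ({u | u ∈ S ∧ G.Adj v u}).ncard + 1 ≤ m := by
            apply Nat.le_floor
            push_cast
            exact this
          omega
        have hcol := induce_colorable_of_deg G S m hdeg
        have := chromNum_le hcol
        rw [hn]
        calc (chromNum (G.induce S) : ℝ) ≤ (m : ℝ) := by exact_mod_cast this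
          _ ≤ Real.sqrt (2 * s * (n + 1)) := Nat.floor_le (Real.sqrt_nonneg _)
          _ = Real.sqrt (2 * s * ((n : ℕ) + 1 : ℕ)) := by push_cast; ring_nf
  have hmain := key (Fintype.card V) Set.univ
    (by rw [Set.ncard_univ, Nat.card_eq_fintype_card])
  have hGle : chromNum G ≤ chromNum (G.induce (Set.univ : Set V)) :=
    chromNum_le (colorable_of_hom (G.induceUnivIso).symm.toHom (colorable_chromNum _))
  have := le_trans (by exact_mod_cast hGle : (chromNum G : ℝ) ≤ _) hmain
  rwa [Set.ncard_univ, Nat.card_eq_fintype_card] at this
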